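/- Let K be a nonempty, compact, perfect subset of the circle ℝ/ℤ. Define an equivalence relation ~ on K by declaring x ~ y if and only if x = y, or x and y both belong to the closure of a single connected component of the complement (ℝ/ℤ) \ K. Then the quotient topological space K/~ is homeomorphic to the circle ℝ/ℤ. -/

import Mathlib

open MeasureTheory Set Function Filter Topology TopologicalSpace
open scoped ENNReal

/-- The relation on a subset `K` of the circle identifying the two endpoints of each
gap (connected component of the complement of `K`): `x ~ y` iff `x = y` or `x` and
`y` both lie in the closure of a single connected component of `(ℝ/ℤ) \ K`. -/
def gapRel (K : Set UnitAddCircle) (x y : K) : Prop :=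
  x = y ∨ ∃ z ∈ Kᶜ, (x : UnitAddCircle) ∈ closure (connectedComponentIn Kᶜ z) ∧
    (y : UnitAddCircle) ∈ closure (connectedComponentIn Kᶜ z)

namespace Stmt8
noncomputable section

local notation "π" => (QuotientAddGroup.mk : ℝ → UnitAddCircle)

instance : Fact ((0:ℝ) < 1) := ⟨zero_lt_one⟩



/-- binary digit -/
def dig (n : ℕ) (x : ℝ) : ℤ := ⌊2 ^ (n + 1) * x⌋ - 2 * ⌊2 ^ n * x⌋

lemma dig_nonneg (n : ℕ) (x : ℝ) : 0 ≤ dig n x := by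
  have hp : (2:ℝ) ^ (n+1) = 2 * 2 ^ n := by ring
  have h : ((2 * ⌊2 ^ n * x⌋ : ℤ) : ℝ) ≤ 2 ^ (n + 1) * x := by
    have := Int.floor_le (2 ^ n * x)
    push_cast; rw [hp]; nlinarith
  have := Int.le_floor.mpr h
  simp only [dig]; omega

lemma dig_le_one (n : ℕ) (x : ℝ) : dig n x ≤ 1 := by
  have hp : (2:ℝ) ^ (n+1) = 2 * 2 ^ n := by ring
  have h : 2 ^ (n + 1) * x < ((2 * ⌊2 ^ n * x⌋ + 2 : ℤ) : ℝ) := by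
    have := Int.lt_floor_add_one (2 ^ n * x)
    push_cast; rw [hp]; nlinarith
  have h2 : ⌊2 ^ (n+1) * x⌋ < 2 * ⌊2 ^ n * x⌋ + 2 := by
    rw [Int.floor_lt]; exact h
  simp only [dig]; omega

lemma floor_eq_of_dig_eq {x y : ℝ} (hx : x ∈ Ico (0:ℝ) 1) (hy : y ∈ Ico (0:ℝ) 1)
    (h : ∀ n, dig n x = dig n y) : ∀ n : ℕ, ⌊2 ^ n * x⌋ = ⌊2 ^ n * y⌋ := by
  intro n
  induction n with
  | zero =>
      simp only [pow_zero, one_mul]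
      rw [Int.floor_eq_zero_iff.mpr (by exact ⟨hx.1, hx.2⟩),
          Int.floor_eq_zero_iff.mpr (by exact ⟨hy.1, hy.2⟩)]
  | succ n ih =>
      have := h n
      simp only [dig] at this
      omega

lemma dig_injOn : InjOn (fun x => fun n => dig n x) (Ico (0:ℝ) 1) := by
  intro x hx y hy hxy
  have h : ∀ n, dig n x = dig n y := fun n => congrFun hxy n
  have hf := floor_eq_of_dig_eq hx hy h
  by_contra hne
  have hd : 0 < |x - y| := abs_pos.mpr (sub_ne_zero.mpr hne)
  obtain ⟨n, hn⟩ := pow_unbounded_of_one_lt (y := (2:ℝ)) (|x - y|)⁻¹ one_lt_two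
  have h2n : (0:ℝ) < 2 ^ n := by positivity
  have hgt : (2 ^ n : ℝ)⁻¹ < |x - y| := by
    rw [inv_lt_comm₀ h2n hd]; exact hn
  have h1 : |2 ^ n * x - 2 ^ n * y| < 1 := by
    have h1 := Int.floor_le (2 ^ n * x)
    have h2 := Int.lt_floor_add_one (2 ^ n * x)
    have h3 := Int.floor_le (2 ^ n * y)
    have h4 := Int.lt_floor_add_one (2 ^ n * y)
    rw [hf n] at h1 h2
    rw [abs_sub_lt_iff]; constructor <;> linarith
  have : |x - y| < (2 ^ n)⁻¹ := by
    rw [← mul_sub, abs_mul, abs_of_pos h2n] at h1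
    calc |x-y| = (2^n)⁻¹ * (2^n * |x-y|) := by field_simp
      _ < (2^n)⁻¹ * 1 := by
          exact mul_lt_mul_of_pos_left h1 (by positivity)
      _ = (2^n)⁻¹ := mul_one _
  linarith

/-- digits as a boolean sequence -/
def D : ℝ → (ℕ → Bool) := fun x n => decide (dig n x = 1)

lemma D_injOn : InjOn D (Ico (0:ℝ) 1) := by
  intro x hx y hy hxy
  refine dig_injOn hx hy ?_
  funext n
  show dig n x = dig n y
  have h1 := dig_nonneg n x
  have h2 := dig_le_one n x
  have h3 := dig_nonneg n y
  have h4 := dig_le_one n y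
  have hD := congrFun hxy n
  simp only [D, decide_eq_decide] at hD
  omega

lemma measurable_dig (n : ℕ) : Measurable (dig n) := by
  apply Measurable.sub
  · exact Int.measurable_floor.comp (measurable_const_mul _)
  · exact (Int.measurable_floor.comp (measurable_const_mul _)).const_mul 2

lemma measurable_D : Measurable D := by
  refine measurable_pi_lambda _ fun n => ?_
  have : (fun x => D x n) = (fun z : ℤ => decide (z = 1)) ∘ dig n := rfl
  rw [this]
  exact (Measurable.of_discrete).comp (measurable_dig n)






theorem exists_good_measure (K : Set UnitAddCircle) (hne : K.Nonempty) (hperf : Perfect K) :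
    ∃ μ : Measure UnitAddCircle, μ univ = 1 ∧ (∀ x, μ {x} = 0) ∧ μ Kᶜ = 0 ∧
      ∀ U, IsOpen U → (U ∩ K).Nonempty → 0 < μ U := by
  classical
  obtain ⟨b, hbc, -, hb⟩ := exists_countable_basis UnitAddCircle
  set ιs : Set (Set UnitAddCircle) := {B | B ∈ b ∧ (B ∩ K).Nonempty} with hιs
  haveI : Countable ιs := (hbc.mono (fun B hB => hB.1)).to_subtype
  -- the perfect pieces
  have hpieces : ∀ i : ιs, ∃ f : (ℕ → Bool) → UnitAddCircle,
      range f ⊆ closure (i.1 ∩ K) ∧ Continuous f ∧ Injective f := by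
    rintro ⟨B, hBb, hBK⟩
    have hperfB : Perfect (closure (B ∩ K)) :=
      Preperfect.perfect_closure (Preperfect.open_inter hperf.acc (hb.isOpen hBb))
    exact hperfB.exists_nat_bool_injection (hBK.mono subset_closure)
  choose f hfr hfc hfi using hpieces
  obtain ⟨g, hg⟩ := Countable.exists_injective_nat ιs
  have hCK : ∀ i : ιs, closure (i.1 ∩ K) ⊆ K :=
    fun i => closure_minimal inter_subset_right hperf.closed
  -- individual measures
  set m : ιs → Measure UnitAddCircle :=
    fun i => Measure.map (f i ∘ D) (volume.restrict (Ico (0:ℝ) 1)) with hm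
  have hmeas : ∀ i : ιs, Measurable (f i ∘ D) :=
    fun i => ((hfc i).measurable).comp measurable_D
  have hmS : ∀ i : ιs, ∀ S : Set UnitAddCircle, MeasurableSet S → closure (i.1 ∩ K) ⊆ S →
      m i S = 1 := by
    intro i S hS hsub
    rw [hm, Measure.map_apply (hmeas i) hS]
    have : (f i ∘ D) ⁻¹' S = univ := by
      rw [eq_univ_iff_forall]
      intro x
      exact hsub (hfr i (mem_range_self _))
    rw [this, Measure.restrict_apply MeasurableSet.univ, univ_inter, Real.volume_Ico]
    norm_num
  have hmzero : ∀ i : ιs, ∀ S : Set UnitAddCircle, MeasurableSet S → S ∩ K = ∅ →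
      m i S = 0 := by
    intro i S hS hSK
    rw [hm, Measure.map_apply (hmeas i) hS]
    have : (f i ∘ D) ⁻¹' S = ∅ := by
      rw [eq_empty_iff_forall_notMem]
      intro x hx
      have h1 : f i (D x) ∈ K := hCK i (hfr i (mem_range_self _))
      have h2 : f i (D x) ∈ S ∩ K := ⟨hx, h1⟩
      rw [hSK] at h2
      exact notMem_empty _ h2
    simp [this]
  have hmatom : ∀ i : ιs, ∀ y : UnitAddCircle, m i {y} = 0 := by
    intro i y
    rw [hm, Measure.map_apply (hmeas i) (measurableSet_singleton y)]
    rw [Measure.restrict_apply ((hmeas i) (measurableSet_singleton y))]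
    have hss : ((f i ∘ D) ⁻¹' {y} ∩ Ico (0:ℝ) 1).Subsingleton := by
      rintro u ⟨hu, hu'⟩ v ⟨hv, hv'⟩
      have : f i (D u) = f i (D v) := by
        simp only [mem_preimage, mem_singleton_iff, comp_apply] at hu hv
        rw [hu, hv]
      exact D_injOn hu' hv' (hfi i this)
    exact hss.measure_zero _
  have hmle : ∀ i : ιs, ∀ S, m i S ≤ 1 := by
    intro i S
    calc m i S ≤ m i univ := measure_mono (subset_univ _)
      _ = 1 := hmS i univ MeasurableSet.univ (subset_univ _)
  -- the sum measure
  set w : ιs → ℝ≥0∞ := fun i => (2:ℝ≥0∞)⁻¹ ^ (g i) with hw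
  set μ₀ : Measure UnitAddCircle := Measure.sum (fun i => w i • m i) with hμ₀
  have hμ₀app : ∀ S, MeasurableSet S → μ₀ S = ∑' i, w i * m i S := by
    intro S hS
    rw [hμ₀, Measure.sum_apply _ hS]
    rfl
  have hwpos : ∀ i, 0 < w i := by
    intro i
    apply ENNReal.pow_pos
    simp
  have hwfin : ∑' i, w i ≤ 2 := by
    calc ∑' i, w i ≤ ∑' n : ℕ, (2:ℝ≥0∞)⁻¹ ^ n :=
          ENNReal.tsum_comp_le_tsum_of_injective hg _
      _ = (1 - 2⁻¹)⁻¹ := ENNReal.tsum_geometric _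
      _ = 2 := by
          rw [ENNReal.one_sub_inv_two]
          simp
  have hμ₀fin : μ₀ univ ≤ 2 := by
    rw [hμ₀app univ MeasurableSet.univ]
    calc ∑' i, w i * m i univ ≤ ∑' i, w i * 1 := by
          exact ENNReal.tsum_le_tsum (fun i => mul_le_mul_right (hmle i univ) _)
      _ ≤ 2 := by simpa using hwfin
  -- some index exists
  obtain ⟨x₀, hx₀⟩ := hne
  obtain ⟨B₀, hB₀b, hx₀B₀, -⟩ := hb.exists_subset_of_mem_open (mem_univ x₀) isOpen_univ
  have hi₀ : B₀ ∈ ιs := ⟨hB₀b, ⟨x₀, hx₀B₀, hx₀⟩⟩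
  set i₀ : ιs := ⟨B₀, hi₀⟩
  have hμ₀pos : 0 < μ₀ univ := by
    rw [hμ₀app univ MeasurableSet.univ]
    calc (0:ℝ≥0∞) < w i₀ * m i₀ univ := by
          rw [hmS i₀ univ MeasurableSet.univ (subset_univ _), mul_one]
          exact hwpos i₀
      _ ≤ ∑' i, w i * m i univ := ENNReal.le_tsum i₀
  -- normalize
  set c := μ₀ univ
  have hc0 : c ≠ 0 := ne_of_gt hμ₀pos
  have hctop : c ≠ ⊤ := ne_top_of_le_ne_top (by norm_num) hμ₀fin
  refine ⟨c⁻¹ • μ₀, ?_, ?_, ?_, ?_⟩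
  · rw [Measure.smul_apply, smul_eq_mul]
    exact ENNReal.inv_mul_cancel hc0 hctop
  · intro x
    rw [Measure.smul_apply, smul_eq_mul, hμ₀app _ (measurableSet_singleton x)]
    simp [hmatom]
  · rw [Measure.smul_apply, smul_eq_mul,
      hμ₀app _ hperf.closed.isOpen_compl.measurableSet]
    have : ∀ i, m i Kᶜ = 0 := fun i =>
      hmzero i Kᶜ hperf.closed.isOpen_compl.measurableSet (compl_inter_self K)
    simp [this]
  · intro U hU ⟨x, hxU, hxK⟩
    -- find a basis element whose closure-of-piece is inside U
    obtain ⟨S, hSnhds, hSclosed, hSU⟩ :=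
      exists_mem_nhds_isClosed_subset (hU.mem_nhds hxU)
    obtain ⟨B, hBb, hxB, hBS⟩ := hb.exists_subset_of_mem_open (mem_interior_iff_mem_nhds.mpr hSnhds)
      isOpen_interior
    have hi : B ∈ ιs := ⟨hBb, ⟨x, hxB, hxK⟩⟩
    set i : ιs := ⟨B, hi⟩
    have hclosureU : closure (B ∩ K) ⊆ U := by
      calc closure (B ∩ K) ⊆ closure B := closure_mono inter_subset_left
        _ ⊆ closure S := closure_mono (hBS.trans interior_subset)
        _ = S := hSclosed.closure_eq
        _ ⊆ U := hSU
    rw [Measure.smul_apply, smul_eq_mul, hμ₀app U hU.measurableSet]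
    have hpos : (0:ℝ≥0∞) < ∑' j, w j * m j U := by
      calc (0:ℝ≥0∞) < w i * m i U := by
            rw [hmS i U hU.measurableSet hclosureU, mul_one]; exact hwpos i
        _ ≤ ∑' j, w j * m j U := ENNReal.le_tsum i
    exact ENNReal.mul_pos (ENNReal.inv_ne_zero.mpr hctop) hpos.ne'









def R : UnitAddCircle → ℝ := fun z => ((AddCircle.equivIco 1 0) z : ℝ)

lemma measurable_R : Measurable R :=
  measurable_subtype_coe.comp (AddCircle.measurableEquivIco 1 0).measurable

lemma R_mem (z : UnitAddCircle) : R z ∈ Ico (0:ℝ) 1 := by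
  have := ((AddCircle.equivIco 1 0) z).2
  simpa [R] using this

lemma R_coe (x : ℝ) : R (π x) = Int.fract x := by
  have := AddCircle.coe_equivIco_mk_apply 1 x
  simpa [R] using this

lemma R_injective : Injective R :=
  fun a b h => (AddCircle.equivIco 1 0).injective (Subtype.ext h)

lemma coe_eq_coe_iff (x y : ℝ) : π x = π y ↔ ∃ n : ℤ, x - y = n := by
  constructor
  · intro h
    have h' : (x : UnitAddCircle) = (y : UnitAddCircle) := h
    have h2 : ((x - y : ℝ) : UnitAddCircle) = 0 := by
      rw [AddCircle.coe_sub, h', sub_self]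
    rw [AddCircle.coe_eq_zero_iff] at h2
    obtain ⟨n, hn⟩ := h2
    exact ⟨n, by simpa using hn.symm⟩
  · rintro ⟨n, hn⟩
    have : ((x - y : ℝ) : UnitAddCircle) = 0 := by
      rw [AddCircle.coe_eq_zero_iff]
      exact ⟨n, by simpa using hn.symm⟩
    rw [AddCircle.coe_sub, sub_eq_zero] at this
    exact this

lemma coe_add_int (x : ℝ) (n : ℤ) : π (x + n) = π x :=
  (coe_eq_coe_iff _ _).mpr ⟨n, by ring⟩

lemma coe_R (z : UnitAddCircle) : π (R z) = z := by
  obtain ⟨x, rfl⟩ := QuotientAddGroup.mk_surjective z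
  rw [R_coe]
  rw [show Int.fract x = x + (-⌊x⌋ : ℤ) by rw [Int.fract]; push_cast; ring]
  exact coe_add_int x (-⌊x⌋)

lemma isOpenMap_coe : IsOpenMap π := fun s hs => QuotientAddGroup.isOpenMap_coe s hs

lemma continuous_coe : Continuous π := continuous_quotient_mk'

lemma isQuotientMap_coe : IsQuotientMap π := isQuotientMap_quotient_mk'






section Main

variable (K : Set UnitAddCircle) (μ : Measure UnitAddCircle)

/-- preimage of `K` in `ℝ` -/
def KR : Set ℝ := π ⁻¹' K

/-- pushforward of `μ` to `[0,1) ⊆ ℝ` -/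
def ν : Measure ℝ := μ.map R

/-- cumulative distribution function of `ν` -/
def c (x : ℝ) : ℝ := ((ν μ) (Iic x)).toReal

/-- the lifted collapsing map `ℝ → ℝ` -/
def F (t : ℝ) : ℝ := ⌊t⌋ + c μ (t - ⌊t⌋)

variable {K μ}
variable (hμ1 : μ univ = 1) (hμa : ∀ x, μ {x} = 0) (hμK : μ Kᶜ = 0)
  (hμpos : ∀ U, IsOpen U → (U ∩ K).Nonempty → 0 < μ U)

section NuFacts
include hμ1

lemma ν_univ : ν μ univ = 1 := by
  rw [ν, Measure.map_apply measurable_R MeasurableSet.univ, preimage_univ, hμ1]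

lemma ν_fin (s : Set ℝ) : ν μ s ≠ ⊤ := by
  refine ne_top_of_le_ne_top ?_ (measure_mono (subset_univ s))
  rw [ν_univ hμ1]; exact ENNReal.one_ne_top

lemma ν_Iio_zero : ν μ (Iio 0) = 0 := by
  rw [ν, Measure.map_apply measurable_R measurableSet_Iio]
  convert measure_empty (μ := μ)
  rw [eq_empty_iff_forall_notMem]
  intro z hz
  exact absurd (R_mem z).1 (not_le.mpr hz)

lemma ν_Ioi_one : ν μ (Ioi 1) = 0 := by
  rw [ν, Measure.map_apply measurable_R measurableSet_Ioi]
  convert measure_empty (μ := μ)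
  rw [eq_empty_iff_forall_notMem]
  intro z hz
  exact absurd (R_mem z).2 (not_lt.mpr (le_of_lt hz))

include hμa

lemma ν_singleton (x : ℝ) : ν μ {x} = 0 := by
  rw [ν, Measure.map_apply measurable_R (measurableSet_singleton x)]
  rcases eq_empty_or_nonempty (R ⁻¹' {x}) with h | ⟨z, hz⟩
  · rw [h]; exact measure_empty
  · have : R ⁻¹' {x} ⊆ {z} := by
      intro w hw
      simp only [mem_preimage, mem_singleton_iff] at hw hz ⊢
      exact R_injective (hw.trans hz.symm)
    exact le_antisymm (le_trans (measure_mono this) (le_of_eq (hμa z))) zero_le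

lemma ν_Ioc_Ioo (a b : ℝ) : ν μ (Ioc a b) = ν μ (Ioo a b) := by
  rcases le_or_gt b a with h | h
  · rw [Ioc_eq_empty (not_lt.mpr h), Ioo_eq_empty (not_lt.mpr h)]
  · rw [← Ioo_union_Icc_eq_Ioc h le_rfl, Icc_self]
    refine le_antisymm ?_ (measure_mono subset_union_left)
    calc ν μ (Ioo a b ∪ {b}) ≤ ν μ (Ioo a b) + ν μ {b} := measure_union_le _ _
      _ = ν μ (Ioo a b) := by rw [ν_singleton hμ1 hμa, add_zero]

end NuFacts

section CFacts
include hμ1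

lemma c_mono : Monotone (c μ) := by
  intro x y hxy
  exact ENNReal.toReal_mono (ν_fin hμ1 _) (measure_mono (Iic_subset_Iic.mpr hxy))

include hμa

lemma c_zero : c μ 0 = 0 := by
  have : ν μ (Iic 0) = 0 := by
    have h : Iic (0:ℝ) = Iio 0 ∪ {0} := (Iio_union_right).symm
    rw [h]
    refine le_antisymm ?_ zero_le
    calc ν μ (Iio 0 ∪ {0}) ≤ ν μ (Iio 0) + ν μ {0} := measure_union_le _ _
      _ = 0 := by rw [ν_Iio_zero hμ1, ν_singleton hμ1 hμa, add_zero]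
  rw [c, this, ENNReal.toReal_zero]

lemma c_one : c μ 1 = 1 := by
  have h1 : ν μ (Iic 1) + ν μ (Ioi 1) = ν μ univ := by
    rw [← measure_union (Iic_disjoint_Ioi le_rfl) measurableSet_Ioi, Iic_union_Ioi]
  rw [ν_Ioi_one hμ1, add_zero, ν_univ hμ1] at h1
  rw [c, h1]; norm_num

omit hμa in
lemma c_diff (u v : ℝ) (huv : u ≤ v) :
    c μ v - c μ u = ((ν μ) (Ioc u v)).toReal := by
  have h : ν μ (Iic u) + ν μ (Ioc u v) = ν μ (Iic v) := by
    rw [← measure_union (Iic_disjoint_Ioc le_rfl) measurableSet_Ioc, Iic_union_Ioc_eq_Iic huv]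
  rw [c, c, ← h, ENNReal.toReal_add (ν_fin hμ1 _) (ν_fin hμ1 _)]
  ring

lemma c_nonneg (x : ℝ) : 0 ≤ c μ x := ENNReal.toReal_nonneg

lemma c_le_one (x : ℝ) : c μ x ≤ 1 := by
  rw [← c_one hμ1 hμa]
  rcases le_or_gt x 1 with h | h
  · exact c_mono hμ1 h
  · rw [c, c]
    apply ENNReal.toReal_mono (ν_fin hμ1 _)
    apply le_of_eq
    have : ν μ (Iic x) = ν μ (Iic 1) + ν μ (Ioc 1 x) := by
      rw [← measure_union (Iic_disjoint_Ioc le_rfl) measurableSet_Ioc,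
        Iic_union_Ioc_eq_Iic (le_of_lt h)]
    rw [this]
    have hz : ν μ (Ioc 1 x) = 0 :=
      le_antisymm (le_trans (measure_mono Ioc_subset_Ioi_self) (le_of_eq (ν_Ioi_one hμ1)))
        zero_le
    rw [hz, add_zero]

lemma c_continuous : Continuous (c μ) := by
  rw [continuous_iff_continuousAt]
  intro x
  -- right limit
  have hseq : Tendsto (fun n : ℕ => x + 1 / (n + 1)) atTop (𝓝 x) := by
    have := tendsto_one_div_add_atTop_nhds_zero_nat (𝕜 := ℝ)
    have h2 := this.const_add x
    simpa using h2
  have hseq' : Tendsto (fun n : ℕ => x - 1 / (n + 1)) atTop (𝓝 x) := by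
    have := tendsto_one_div_add_atTop_nhds_zero_nat (𝕜 := ℝ)
    have h2 := this.const_sub x
    simpa using h2
  have hright : Tendsto (fun n : ℕ => c μ (x + 1 / (n + 1))) atTop (𝓝 (c μ x)) := by
    have hint : ⋂ n : ℕ, Iic (x + 1 / (n + 1)) = Iic x := by
      apply Subset.antisymm
      · intro y hy
        simp only [mem_iInter, mem_Iic] at hy ⊢
        exact ge_of_tendsto hseq (Eventually.of_forall hy)
      · intro y hy
        simp only [mem_iInter, mem_Iic] at hy ⊢
        intro n
        have : (0:ℝ) < 1 / (n + 1) := by positivity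
        linarith
    have := tendsto_measure_iInter_atTop (μ := ν μ) (s := fun n : ℕ => Iic (x + 1 / (n + 1)))
      (fun n : ℕ => (measurableSet_Iic).nullMeasurableSet)
      (fun m n hmn => Iic_subset_Iic.mpr (by
        have : (1:ℝ) / (n + 1) ≤ 1 / (m + 1) := by
          apply one_div_le_one_div_of_le (by positivity)
          exact_mod_cast by omega
        linarith))
      ⟨0, ν_fin hμ1 _⟩
    rw [hint] at this
    exact (ENNReal.tendsto_toReal (ν_fin hμ1 _)).comp this
  have hleft : Tendsto (fun n : ℕ => c μ (x - 1 / (n + 1))) atTop (𝓝 (c μ x)) := by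
    have hun : ⋃ n : ℕ, Iic (x - 1 / (n + 1)) = Iio x := by
      apply Subset.antisymm
      · intro y hy
        simp only [mem_iUnion, mem_Iic] at hy
        obtain ⟨n, hn⟩ := hy
        have : (0:ℝ) < 1 / (n + 1) := by positivity
        simp only [mem_Iio]; linarith
      · intro y hy
        simp only [mem_Iio] at hy
        obtain ⟨n, hn⟩ := exists_nat_one_div_lt (show (0:ℝ) < x - y by linarith)
        simp only [mem_iUnion, mem_Iic]
        exact ⟨n, by push_cast at hn ⊢; linarith⟩
    have hIio : ν μ (Iio x) = ν μ (Iic x) := by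
      have h : Iic x = Iio x ∪ {x} := (Iio_union_right).symm
      rw [h]
      refine le_antisymm (measure_mono (subset_union_left)) ?_
      calc ν μ (Iio x ∪ {x}) ≤ ν μ (Iio x) + ν μ {x} := measure_union_le _ _
        _ = ν μ (Iio x) := by rw [ν_singleton hμ1 hμa, add_zero]
    have := tendsto_measure_iUnion_atTop (μ := ν μ) (s := fun n : ℕ => Iic (x - 1 / (n + 1)))
      (fun m n hmn => Iic_subset_Iic.mpr (by
        have : (1:ℝ) / (n + 1) ≤ 1 / (m + 1) := by
          apply one_div_le_one_div_of_le (by positivity)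
          exact_mod_cast by omega
        linarith))
    rw [hun, hIio] at this
    exact (ENNReal.tendsto_toReal (ν_fin hμ1 _)).comp this
  -- conclude continuity from monotonicity
  rw [ContinuousAt]
  apply tendsto_order.2
  constructor
  · intro a ha
    have : ∀ᶠ n : ℕ in atTop, a < c μ (x - 1 / (n + 1)) :=
      hleft.eventually (eventually_gt_nhds ha)
    obtain ⟨n, hn⟩ := this.exists
    have hmem : Ioi (x - 1 / (n + 1)) ∈ 𝓝 x := Ioi_mem_nhds (by
      have : (0:ℝ) < 1 / (n + 1) := by positivity
      linarith)
    filter_upwards [hmem] with t ht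
    exact lt_of_lt_of_le hn (c_mono hμ1 (le_of_lt ht))
  · intro a ha
    have : ∀ᶠ n : ℕ in atTop, c μ (x + 1 / (n + 1)) < a :=
      hright.eventually (eventually_lt_nhds ha)
    obtain ⟨n, hn⟩ := this.exists
    have hmem : Iio (x + 1 / (n + 1)) ∈ 𝓝 x := Iio_mem_nhds (by
      have : (0:ℝ) < 1 / (n + 1) := by positivity
      linarith)
    filter_upwards [hmem] with t ht
    exact lt_of_le_of_lt (c_mono hμ1 (le_of_lt ht)) hn

end CFacts

section FFacts
include hμ1 hμa

lemma F_int_add (t : ℝ) (n : ℤ) : F μ (t + n) = F μ t + n := by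
  rw [F, F, Int.floor_add_intCast]
  push_cast
  ring_nf

omit hμ1 hμa in
lemma F_eq_c (t : ℝ) (ht : t ∈ Ico (0:ℝ) 1) : F μ t = c μ t := by
  rw [F, Int.floor_eq_zero_iff.mpr ht]
  push_cast
  ring_nf

lemma F_eq_c' (t : ℝ) (ht : t ∈ Icc (0:ℝ) 1) : F μ t = c μ t := by
  rcases lt_or_eq_of_le ht.2 with h | h
  · exact F_eq_c t ⟨ht.1, h⟩
  · subst h
    rw [F]
    norm_num
    rw [c_zero hμ1 hμa, c_one hμ1 hμa]
    norm_num

lemma F_mono : Monotone (F μ) := by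
  intro s t hst
  have hfl : ⌊s⌋ ≤ ⌊t⌋ := Int.floor_le_floor hst
  rcases eq_or_lt_of_le hfl with h | h
  · rw [F, F, ← h]
    have : s - (⌊s⌋:ℝ) ≤ t - (⌊s⌋:ℝ) := by linarith
    have := c_mono hμ1 this
    linarith
  · have h1 : F μ s ≤ ⌊s⌋ + 1 := by
      rw [F]
      have := c_le_one hμ1 hμa (s - ⌊s⌋)
      linarith
    have h2 : (⌊t⌋:ℝ) ≤ F μ t := by
      rw [F]
      have := c_nonneg (μ := μ) hμ1 hμa (t - (⌊t⌋:ℝ))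
      linarith
    have : (⌊s⌋:ℝ) + 1 ≤ (⌊t⌋:ℝ) := by exact_mod_cast h
    linarith

lemma F_apply_Icc (n : ℤ) (s : ℝ) (hs : s ∈ Icc (n:ℝ) (n+1)) :
    F μ s = n + c μ (s - n) := by
  rcases lt_or_eq_of_le hs.2 with h | h
  · have : ⌊s⌋ = n := Int.floor_eq_iff.mpr ⟨hs.1, h⟩
    rw [F, this]
  · subst h
    rw [F]
    have hfl : ⌊(n:ℝ) + 1⌋ = n + 1 := by
      rw [show ((n:ℝ) + 1) = ((n + 1 : ℤ):ℝ) by push_cast; ring, Int.floor_intCast]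
    rw [hfl]
    push_cast
    have h0 : ((n:ℝ) + 1) - (n + 1) = 0 := by ring
    have h1 : ((n:ℝ) + 1) - n = 1 := by ring
    rw [h0, h1, c_zero hμ1 hμa, c_one hμ1 hμa]
    ring

lemma F_continuous : Continuous (F μ) := by
  rw [continuous_iff_continuousAt]
  intro t
  rw [continuousAt_iff_continuous_left_right]
  constructor
  · -- left
    obtain ⟨a, ha1, ha2⟩ : ∃ a : ℤ, (a:ℝ) < t ∧ t ≤ a + 1 := by
      rcases eq_or_lt_of_le (Int.floor_le t) with h | h
      · exact ⟨⌊t⌋ - 1, by push_cast; linarith, by push_cast; linarith⟩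
      · exact ⟨⌊t⌋, h, le_of_lt (Int.lt_floor_add_one t)⟩
    have hG : ContinuousAt (fun s => (a:ℝ) + c μ (s - a)) t := by
      apply ContinuousAt.add continuousAt_const
      exact ((c_continuous hμ1 hμa).comp (continuous_sub_right _)).continuousAt
    apply ContinuousWithinAt.congr_of_eventuallyEq hG.continuousWithinAt
    · filter_upwards [inter_mem_nhdsWithin (Iic t) (Ioi_mem_nhds ha1)] with s hs
      exact F_apply_Icc hμ1 hμa a s ⟨le_of_lt hs.2, le_trans hs.1 ha2⟩
    · exact F_apply_Icc hμ1 hμa a t ⟨le_of_lt ha1, ha2⟩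
  · -- right
    set a := ⌊t⌋
    have ha1 : (a:ℝ) ≤ t := Int.floor_le t
    have ha2 : t < a + 1 := Int.lt_floor_add_one t
    have hG : ContinuousAt (fun s => (a:ℝ) + c μ (s - a)) t := by
      apply ContinuousAt.add continuousAt_const
      exact ((c_continuous hμ1 hμa).comp (continuous_sub_right _)).continuousAt
    apply ContinuousWithinAt.congr_of_eventuallyEq hG.continuousWithinAt
    · filter_upwards [inter_mem_nhdsWithin (Ici t) (Iio_mem_nhds ha2)] with s hs
      exact F_apply_Icc hμ1 hμa a s ⟨le_trans ha1 hs.1, le_of_lt hs.2⟩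
    · exact F_apply_Icc hμ1 hμa a t ⟨ha1, le_of_lt ha2⟩

end FFacts

section KFacts

variable (hK : IsClosed K) (hKacc : Preperfect K) (hne : K.Nonempty)

omit hμ1 hμa in
lemma KR_int (x : ℝ) (n : ℤ) : x + n ∈ KR K ↔ x ∈ KR K := by
  unfold KR
  rw [mem_preimage, mem_preimage, coe_add_int]

include hK in
omit hμ1 hμa in
lemma KR_closed : IsClosed (KR K) := hK.preimage continuous_coe

omit hμ1 hμa in
lemma KR_preperfect (hKacc : Preperfect K) :
    ∀ w ∈ KR K, ∀ U, IsOpen U → w ∈ U → ∃ y ∈ U ∩ KR K, y ≠ w := by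
  intro w hw U hU hwU
  set V := U ∩ Ioo (w - 2⁻¹) (w + 2⁻¹) with hV
  have hVopen : IsOpen V := hU.inter isOpen_Ioo
  have hwV : w ∈ V := ⟨hwU, by constructor <;> [linarith; linarith]⟩
  have himg : IsOpen (π '' V) := isOpenMap_coe V hVopen
  have hnhds : π '' V ∈ 𝓝 (π w) := himg.mem_nhds (mem_image_of_mem _ hwV)
  obtain ⟨y', hy'⟩ := (preperfect_iff_nhds.mp hKacc) (π w) hw _ hnhds
  obtain ⟨⟨y, hyV, hyπ⟩, hy'K⟩ := hy'.1
  refine ⟨y, ⟨hyV.1, ?_⟩, ?_⟩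
  · rw [KR, mem_preimage, hyπ]; exact hy'K
  · intro h
    subst h
    exact hy'.2 hyπ.symm

omit hμ1 hμa in
include hne in
lemma KR_exists_between (s d : ℝ) (hd : 1 < d) : ∃ k ∈ KR K, s < k ∧ k < s + d := by
  obtain ⟨z, hz⟩ := hne
  obtain ⟨x₀, rfl⟩ := QuotientAddGroup.mk_surjective z
  set n : ℤ := ⌊s - x₀⌋ + 1 with hn
  refine ⟨x₀ + n, ?_, ?_, ?_⟩
  · rw [KR_int]; exact hz
  · have := Int.lt_floor_add_one (s - x₀)
    push_cast [hn]
    linarith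
  · have := Int.floor_le (s - x₀)
    push_cast [hn]
    linarith

-- bridging lemmas
include hμK in
lemma ν_Ioo_zero (a b : ℝ) (ha : 0 ≤ a) (hb : b ≤ 1)
    (hab : Ioo a b ∩ KR K = ∅) : ν μ (Ioo a b) = 0 := by
  rw [ν, Measure.map_apply measurable_R measurableSet_Ioo]
  refine le_antisymm (le_trans (measure_mono ?_) (le_of_eq hμK)) zero_le
  intro z hz
  rw [mem_preimage] at hz
  intro hzK
  have h1 : R z ∈ KR K := by
    rw [KR, mem_preimage, coe_R]; exact hzK
  rw [eq_empty_iff_forall_notMem] at hab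
  exact hab (R z) ⟨hz, h1⟩

include hμpos in
lemma ν_Ioo_pos (a b : ℝ) (ha : 0 ≤ a) (hb : b ≤ 1)
    (hab : (Ioo a b ∩ KR K).Nonempty) : 0 < ν μ (Ioo a b) := by
  obtain ⟨y, hy, hyK⟩ := hab
  rw [ν, Measure.map_apply measurable_R measurableSet_Ioo]
  have hsub : π '' Ioo a b ⊆ R ⁻¹' Ioo a b := by
    rintro _ ⟨u, hu, rfl⟩
    rw [mem_preimage, R_coe, Int.fract_eq_self.mpr ⟨le_trans ha (le_of_lt hu.1),
      lt_of_lt_of_le hu.2 hb⟩]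
    exact hu
  refine lt_of_lt_of_le ?_ (measure_mono hsub)
  apply hμpos _ (isOpenMap_coe _ isOpen_Ioo)
  exact ⟨π y, mem_image_of_mem _ hy, hyK⟩

-- the two key monotonicity lemmas, first in normalized position
include hμ1 hμa hμK in
lemma P2_core (u v : ℝ) (hu : u ∈ Ico (0:ℝ) 1) (huv : u ≤ v) (hv : v ≤ u + 1)
    (hgap : Ioo u v ∩ KR K = ∅) : F μ u = F μ v := by
  rcases eq_or_lt_of_le huv with rfl | hlt
  · rfl
  rcases le_or_gt v 1 with h1 | h1
  · -- same window
    rw [F_eq_c' hμ1 hμa u ⟨hu.1, le_trans huv h1⟩, F_eq_c' hμ1 hμa v ⟨le_trans hu.1 huv, h1⟩]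
    have hd := c_diff hμ1 (u := u) (v := v) huv
    rw [ν_Ioc_Ioo hμ1 hμa, ν_Ioo_zero hμK u v hu.1 h1 hgap] at hd
    simp only [ENNReal.toReal_zero] at hd
    linarith
  · -- crossing 1
    have hv1 : v - 1 ∈ Icc (0:ℝ) 1 := ⟨by linarith, by linarith [hu.2]⟩
    have hFv : F μ v = F μ (v - 1) + 1 := by
      have := F_int_add hμ1 hμa (v - 1) 1
      push_cast at this
      simpa using this
    rw [hFv, F_eq_c' hμ1 hμa (v-1) hv1, F_eq_c' hμ1 hμa u ⟨hu.1, le_of_lt hu.2⟩]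
    -- two pieces
    have hz1 : ν μ (Ioo u 1) = 0 := by
      apply ν_Ioo_zero hμK u 1 hu.1 le_rfl
      rw [eq_empty_iff_forall_notMem]
      intro y hy
      rw [eq_empty_iff_forall_notMem] at hgap
      exact hgap y ⟨⟨hy.1.1, lt_of_lt_of_le hy.1.2 (le_of_lt h1)⟩, hy.2⟩
    have hz2 : ν μ (Ioo 0 (v-1)) = 0 := by
      apply ν_Ioo_zero hμK 0 (v-1) le_rfl hv1.2
      rw [eq_empty_iff_forall_notMem]
      intro y hy
      rw [eq_empty_iff_forall_notMem] at hgap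
      apply hgap (y + 1)
      constructor
      · constructor
        · linarith [hy.1.1, hu.2]
        · linarith [hy.1.2]
      · have := (KR_int (K := K) y 1).mpr
        rw [show ((1:ℤ):ℝ) = (1:ℝ) by norm_num] at this
        exact this hy.2
    have hcu : 1 - c μ u = (ν μ (Ioc u 1)).toReal := by
      have := c_diff hμ1 (u := u) (v := 1) (le_of_lt hu.2)
      rw [c_one hμ1 hμa] at this
      linarith
    have hcv : c μ (v-1) - 0 = (ν μ (Ioc 0 (v-1))).toReal := by
      have := c_diff hμ1 (u := (0:ℝ)) (v := v-1) hv1.1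
      rw [c_zero hμ1 hμa] at this
      linarith
    rw [ν_Ioc_Ioo hμ1 hμa, hz1] at hcu
    rw [ν_Ioc_Ioo hμ1 hμa, hz2] at hcv
    simp only [ENNReal.toReal_zero] at hcu hcv
    linarith

include hμ1 hμa hμK in
lemma P2 (u v : ℝ) (huv : u ≤ v) (hv : v ≤ u + 1)
    (hgap : Ioo u v ∩ KR K = ∅) : F μ u = F μ v := by
  set n := ⌊u⌋
  have hu' : u - (n:ℝ) ∈ Ico (0:ℝ) 1 := ⟨sub_nonneg.mpr (Int.floor_le u),
    by have := Int.lt_floor_add_one u; linarith⟩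
  have key := P2_core hμ1 hμa hμK (u - (n:ℝ)) (v - (n:ℝ)) hu' (by linarith) (by linarith) ?_
  · have h1 := F_int_add hμ1 hμa (u - (n:ℝ)) n
    have h2 := F_int_add hμ1 hμa (v - (n:ℝ)) n
    simp only [sub_add_cancel] at h1 h2
    linarith
  · rw [eq_empty_iff_forall_notMem]
    intro y hy
    rw [eq_empty_iff_forall_notMem] at hgap
    apply hgap (y + n)
    exact ⟨⟨by linarith [hy.1.1], by linarith [hy.1.2]⟩, (KR_int y n).mpr hy.2⟩

include hμ1 hμa hμK hμpos hKacc in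
lemma P3_core (u v : ℝ) (hu : u ∈ Ico (0:ℝ) 1) (huv : u < v) (hv : v ≤ u + 1)
    (hmeet : (Ioo u v ∩ KR K).Nonempty) : F μ u < F μ v := by
  rcases le_or_gt v 1 with h1 | h1
  · rw [F_eq_c' hμ1 hμa u ⟨hu.1, le_trans (le_of_lt huv) h1⟩,
      F_eq_c' hμ1 hμa v ⟨le_trans hu.1 (le_of_lt huv), h1⟩]
    have hd := c_diff hμ1 (u := u) (v := v) (le_of_lt huv)
    have hpos := ν_Ioo_pos hμpos u v hu.1 h1 hmeet
    rw [ν_Ioc_Ioo hμ1 hμa] at hd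
    have : 0 < (ν μ (Ioo u v)).toReal :=
      ENNReal.toReal_pos (ne_of_gt hpos) (ν_fin hμ1 _)
    linarith
  · -- crossing 1 : use preperfectness to find a point ≠ 1
    obtain ⟨w, hw, hwK⟩ := hmeet
    obtain ⟨w', hw', hw'1⟩ : ∃ w' ∈ Ioo u v ∩ KR K, w' ≠ 1 := by
      obtain ⟨y, hy, hyne⟩ := KR_preperfect (K := K) hKacc w hwK (Ioo u v) isOpen_Ioo hw
      rcases eq_or_ne w 1 with rfl | hne1
      · exact ⟨y, hy, by intro h; exact hyne (by rw [h])⟩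
      · exact ⟨w, ⟨hw, hwK⟩, hne1⟩
    have hv1 : v - 1 ∈ Icc (0:ℝ) 1 := ⟨by linarith, by linarith [hu.2]⟩
    have hFv : F μ v = F μ (v - 1) + 1 := by
      have := F_int_add hμ1 hμa (v - 1) 1
      push_cast at this
      simpa using this
    rw [hFv, F_eq_c' hμ1 hμa (v-1) hv1, F_eq_c' hμ1 hμa u ⟨hu.1, le_of_lt hu.2⟩]
    have hcu : 1 - c μ u = (ν μ (Ioo u 1)).toReal := by
      have := c_diff hμ1 (u := u) (v := 1) (le_of_lt hu.2)
      rw [c_one hμ1 hμa, ν_Ioc_Ioo hμ1 hμa] at this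
      linarith
    have hcv : c μ (v-1) = (ν μ (Ioo 0 (v-1))).toReal := by
      have := c_diff hμ1 (u := (0:ℝ)) (v := v-1) hv1.1
      rw [c_zero hμ1 hμa, ν_Ioc_Ioo hμ1 hμa] at this
      linarith
    rcases lt_or_gt_of_ne hw'1 with hlt | hgt
    · -- w' < 1 : first piece positive
      have hpos : 0 < ν μ (Ioo u 1) :=
        ν_Ioo_pos hμpos u 1 hu.1 le_rfl ⟨w', ⟨⟨hw'.1.1, hlt⟩, hw'.2⟩⟩
      have h2 : 0 ≤ c μ (v - 1) := c_nonneg hμ1 hμa _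
      have : 0 < (ν μ (Ioo u 1)).toReal := ENNReal.toReal_pos (ne_of_gt hpos) (ν_fin hμ1 _)
      linarith
    · -- w' > 1 : second piece positive
      have hmem : w' - 1 ∈ Ioo (0:ℝ) (v-1) ∩ KR K := by
        refine ⟨⟨by linarith, by linarith [hw'.1.2]⟩, ?_⟩
        have := (KR_int (K := K) (w' - 1) 1).mp
        rw [show ((1:ℤ):ℝ) = (1:ℝ) by norm_num, sub_add_cancel] at this
        exact this hw'.2
      have hpos : 0 < ν μ (Ioo 0 (v-1)) :=
        ν_Ioo_pos hμpos 0 (v-1) le_rfl hv1.2 ⟨w' - 1, hmem⟩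
      have h2 : 1 - c μ u ≥ 0 := by
        have := c_le_one hμ1 hμa u; linarith
      have : 0 < (ν μ (Ioo 0 (v-1))).toReal := ENNReal.toReal_pos (ne_of_gt hpos) (ν_fin hμ1 _)
      linarith

include hμ1 hμa hμK hμpos hKacc in
lemma P3 (u v : ℝ) (huv : u < v)
    (hmeet : (Ioo u v ∩ KR K).Nonempty) : F μ u < F μ v := by
  rcases le_or_gt v (u + 1) with hv | hv
  · set n := ⌊u⌋
    have hu' : u - (n:ℝ) ∈ Ico (0:ℝ) 1 := ⟨sub_nonneg.mpr (Int.floor_le u),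
      by have := Int.lt_floor_add_one u; linarith⟩
    have hmeet' : (Ioo (u - (n:ℝ)) (v - (n:ℝ)) ∩ KR K).Nonempty := by
      obtain ⟨y, hy, hyK⟩ := hmeet
      refine ⟨y - (n:ℝ), ⟨by constructor <;> [linarith [hy.1]; linarith [hy.2]], ?_⟩⟩
      have := (KR_int (K := K) (y - (n:ℝ)) n).mp
      rw [sub_add_cancel] at this
      exact this hyK
    have key := P3_core hμ1 hμa hμK hμpos hKacc (u - (n:ℝ)) (v - (n:ℝ)) hu' (by linarith)
      (by linarith) hmeet'
    have h1 := F_int_add hμ1 hμa (u - (n:ℝ)) n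
    have h2 := F_int_add hμ1 hμa (v - (n:ℝ)) n
    simp only [sub_add_cancel] at h1 h2
    linarith
  · have h1 : F μ (u + 1) ≤ F μ v := F_mono hμ1 hμa (by linarith)
    have h2 := F_int_add hμ1 hμa u 1
    push_cast at h2
    have h3 : F μ u < F μ u + 1 := by linarith
    calc F μ u < F μ u + 1 := h3
      _ = F μ (u + 1) := h2.symm
      _ ≤ F μ v := h1

include hμ1 hμa hμK hμpos hKacc hK hne in
lemma F_surjOn : ∀ r : ℝ, ∃ a ∈ KR K, F μ a = r := by
  intro r
  -- F is surjective
  obtain ⟨t, ht⟩ : ∃ t, F μ t = r := by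
    set N : ℕ := ⌈|r - F μ 0|⌉₊ + 1 with hN
    have hNr : |r - F μ 0| ≤ N := by
      have := Nat.le_ceil |r - F μ 0|
      push_cast [hN]
      push_cast at this
      linarith
    have hlow : F μ (-(N:ℝ)) ≤ r := by
      have h := F_int_add hμ1 hμa 0 (-(N:ℤ))
      simp only [Int.cast_neg, Int.cast_natCast, zero_add] at h
      rw [h]
      linarith [(abs_le.mp hNr).1]
    have hhigh : r ≤ F μ (N:ℝ) := by
      have h := F_int_add hμ1 hμa 0 (N:ℤ)
      simp only [Int.cast_natCast, zero_add] at h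
      rw [h]
      linarith [(abs_le.mp hNr).2]
    have hmem : r ∈ Icc (F μ (-(N:ℝ))) (F μ (N:ℝ)) := ⟨hlow, hhigh⟩
    obtain ⟨t, _, ht⟩ := intermediate_value_Icc (by linarith [Nat.cast_nonneg (α := ℝ) N])
      ((F_continuous hμ1 hμa).continuousOn) hmem
    exact ⟨t, ht⟩
  -- move to a point of KR
  set a := sSup (KR K ∩ Iic t) with ha
  have hKne : (KR K ∩ Iic t).Nonempty := by
    obtain ⟨k, hk, hk1, hk2⟩ := KR_exists_between (K := K) hne (t - 2) (3/2) (by norm_num)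
    exact ⟨k, hk, by simp only [mem_Iic]; linarith⟩
  have hbdd : BddAbove (KR K ∩ Iic t) := ⟨t, fun y hy => hy.2⟩
  have haK : a ∈ KR K ∩ Iic t :=
    IsClosed.csSup_mem ((KR_closed (K := K) hK).inter isClosed_Iic) hKne hbdd
  refine ⟨a, haK.1, ?_⟩
  have hat : a ≤ t := haK.2
  rcases eq_or_lt_of_le hat with h | h
  · rw [h]; exact ht
  · have hgap : Ioo a t ∩ KR K = ∅ := by
      rw [eq_empty_iff_forall_notMem]
      rintro y ⟨hy1, hy2⟩
      have : y ≤ a := le_csSup hbdd ⟨hy2, le_of_lt hy1.2⟩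
      linarith [hy1.1]
    have hta : t ≤ a + 1 := by
      by_contra hcon
      push_neg at hcon
      obtain ⟨k, hk, hk1, hk2⟩ := KR_exists_between (K := K) hne a (t - a) (by linarith)
      rw [eq_empty_iff_forall_notMem] at hgap
      exact hgap k ⟨⟨hk1, by linarith⟩, hk⟩
    rw [P2 hμ1 hμa hμK a t (le_of_lt h) hta hgap]
    exact ht

end KFacts

section Phi

/-- the collapsing self-map of the circle -/
def Φ (m : Measure UnitAddCircle) : UnitAddCircle → UnitAddCircle := fun z => π (F m (R z))

variable (hK : IsClosed K) (hKacc : Preperfect K)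

include hμ1 hμa in
lemma Φ_coe (x : ℝ) : Φ μ (π x) = π (F μ x) := by
  rw [Φ, R_coe]
  apply (coe_eq_coe_iff _ _).mpr
  refine ⟨-⌊x⌋, ?_⟩
  have h := F_int_add hμ1 hμa (Int.fract x) ⌊x⌋
  rw [Int.fract_add_floor] at h
  rw [h]
  push_cast
  ring

include hμ1 hμa in
lemma Φ_continuous : Continuous (Φ μ) := by
  rw [isQuotientMap_coe.continuous_iff]
  have : (Φ μ) ∘ π = fun x => π (F μ x) := funext (Φ_coe hμ1 hμa)
  rw [this]
  exact continuous_coe.comp (F_continuous hμ1 hμa)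

include hμ1 hμa hμK hK in
lemma Φ_locally_const : ∀ w ∈ (Kᶜ : Set UnitAddCircle),
    ∃ U, IsOpen U ∧ w ∈ U ∧ ∀ w' ∈ U, Φ μ w' = Φ μ w := by
  intro w hw
  obtain ⟨x, rfl⟩ := QuotientAddGroup.mk_surjective w
  have hxO : x ∈ (KR K)ᶜ := by
    rw [mem_compl_iff, KR, mem_preimage]
    exact hw
  have hopen : IsOpen (KR K)ᶜ := (KR_closed (K := K) hK).isOpen_compl
  obtain ⟨a, b, hxab, hab⟩ := mem_nhds_iff_exists_Ioo_subset.mp (hopen.mem_nhds hxO)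
  set a' := max a (x - 4⁻¹) with ha'
  set b' := min b (x + 4⁻¹) with hb'
  have hxab' : x ∈ Ioo a' b' :=
    ⟨max_lt hxab.1 (by linarith), lt_min hxab.2 (by linarith)⟩
  have hsub : Ioo a' b' ⊆ (KR K)ᶜ := fun y hy =>
    hab ⟨lt_of_le_of_lt (le_max_left _ _) hy.1, lt_of_lt_of_le hy.2 (min_le_left _ _)⟩
  have hlen : b' - a' ≤ 2⁻¹ := by
    have h1 : a' ≥ x - 4⁻¹ := le_max_right _ _
    have h2 : b' ≤ x + 4⁻¹ := min_le_right _ _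
    linarith
  refine ⟨π '' Ioo a' b', isOpenMap_coe _ isOpen_Ioo, mem_image_of_mem _ hxab', ?_⟩
  rintro _ ⟨y, hy, rfl⟩
  rw [Φ_coe hμ1 hμa, Φ_coe hμ1 hμa]
  have key : ∀ s t : ℝ, s ∈ Ioo a' b' → t ∈ Ioo a' b' → s ≤ t → F μ s = F μ t := by
    intro s t hs ht hst
    apply P2 hμ1 hμa hμK s t hst (by linarith [hs.1, ht.2])
    rw [eq_empty_iff_forall_notMem]
    intro q hq
    exact hsub ⟨lt_trans hs.1 hq.1.1, lt_trans hq.1.2 ht.2⟩ hq.2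
  rcases le_total x y with h | h
  · rw [key x y hxab' hy h]
  · rw [key y x hy hxab' h]

include hμ1 hμa hμK hK in
lemma Φ_const_on_gap {z : UnitAddCircle} (hz : z ∈ (Kᶜ : Set UnitAddCircle)) :
    ∀ w ∈ closure (connectedComponentIn Kᶜ z), Φ μ w = Φ μ z := by
  set C := connectedComponentIn Kᶜ z with hC
  have hzC : z ∈ C := mem_connectedComponentIn hz
  have hCsub : C ⊆ Kᶜ := connectedComponentIn_subset _ _
  have hconst : EqOn (Φ μ) (fun _ => Φ μ z) C := by
    haveI : PreconnectedSpace C :=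
      Subtype.preconnectedSpace (isPreconnected_connectedComponentIn)
    have hLC : IsLocallyConstant ((Φ μ) ∘ (Subtype.val : C → UnitAddCircle)) := by
      rw [IsLocallyConstant.iff_exists_open]
      rintro ⟨w, hwC⟩
      obtain ⟨U, hUopen, hwU, hUconst⟩ := Φ_locally_const hμ1 hμa hμK hK w (hCsub hwC)
      refine ⟨Subtype.val ⁻¹' U, hUopen.preimage continuous_subtype_val, hwU, ?_⟩
      rintro ⟨w', hw'C⟩ hw'U
      simp only [comp_apply]
      exact hUconst w' hw'U
    intro w hwC
    exact hLC.apply_eq_of_preconnectedSpace ⟨w, hwC⟩ ⟨z, hzC⟩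
  have hclosure : EqOn (Φ μ) (fun _ => Φ μ z) (closure C) :=
    hconst.closure (Φ_continuous hμ1 hμa) continuous_const
  exact fun w hw => hclosure hw

include hμ1 hμa hμK hμpos hKacc in
lemma gap_of_eq {x y : ↥K} (h : Φ μ (x : UnitAddCircle) = Φ μ (y : UnitAddCircle)) :
    gapRel K x y := by
  obtain ⟨u, hu⟩ := QuotientAddGroup.mk_surjective (x : UnitAddCircle)
  have huK : u ∈ KR K := by rw [KR, mem_preimage, hu]; exact x.2
  obtain ⟨w, hw⟩ := QuotientAddGroup.mk_surjective (y : UnitAddCircle)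
  set v := u + Int.fract (w - u) with hv
  have hvy : π v = (y : UnitAddCircle) := by
    rw [hv, Int.fract]
    rw [show u + (w - u - ⌊w - u⌋) = w + ((-⌊w - u⌋ : ℤ) : ℝ) by push_cast; ring]
    rw [coe_add_int, hw]
  have hvK : v ∈ KR K := by rw [KR, mem_preimage, hvy]; exact y.2
  have huv1 : u ≤ v := le_add_of_nonneg_right (Int.fract_nonneg _)
  have huv2 : v < u + 1 := by
    have := Int.fract_lt_one (w - u); rw [hv]; linarith
  have hF : π (F μ u) = π (F μ v) := by
    rw [← Φ_coe hμ1 hμa, ← Φ_coe hμ1 hμa, hu, hvy]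
    exact h
  obtain ⟨n, hn⟩ := (coe_eq_coe_iff _ _).mp hF
  have h0 : 0 ≤ F μ v - F μ u := sub_nonneg.mpr (F_mono hμ1 hμa huv1)
  have h1 : F μ v - F μ u ≤ 1 := by
    have hm := F_mono hμ1 hμa (le_of_lt huv2)
    have h2 := F_int_add hμ1 hμa u 1
    push_cast at h2
    linarith
  have hn01 : n = 0 ∨ n = -1 := by
    have hl : (-1 : ℝ) ≤ (n : ℝ) := by rw [← hn]; linarith
    have hr : (n : ℝ) ≤ 0 := by rw [← hn]; linarith
    have hl' : (-1 : ℤ) ≤ n := by exact_mod_cast hl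
    have hr' : n ≤ 0 := by exact_mod_cast hr
    omega
  rcases hn01 with rfl | rfl
  · -- F u = F v
    have hFuv : F μ u = F μ v := by
      have : (F μ u) - (F μ v) = 0 := by rw [hn]; norm_num
      linarith
    rcases eq_or_lt_of_le huv1 with heq | hlt
    · left
      apply Subtype.ext
      rw [← hu, ← hvy, heq]
    · have hgap : Ioo u v ∩ KR K = ∅ := by
        by_contra hcon
        rw [← ne_eq, ← nonempty_iff_ne_empty] at hcon
        have := P3 hμ1 hμa hμK hμpos hKacc u v hlt hcon
        linarith
      refine Or.inr ⟨π ((u + v) / 2), ?_, ?_, ?_⟩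
      · rw [mem_compl_iff]
        intro hmem
        have : (u + v) / 2 ∈ Ioo u v ∩ KR K :=
          ⟨⟨by linarith, by linarith⟩, by rwa [KR, mem_preimage]⟩
        rw [hgap] at this
        exact notMem_empty _ this
      · -- x in closure
        have hzS : π ((u + v) / 2) ∈ π '' Ioo u v :=
          mem_image_of_mem _ ⟨by linarith, by linarith⟩
        have hSsub : π '' Ioo u v ⊆ (Kᶜ : Set UnitAddCircle) := by
          rintro _ ⟨s, hs, rfl⟩
          rw [mem_compl_iff]
          intro hsK
          have : s ∈ Ioo u v ∩ KR K := ⟨hs, by rwa [KR, mem_preimage]⟩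
          rw [hgap] at this
          exact notMem_empty _ this
        have hSC : π '' Ioo u v ⊆ connectedComponentIn Kᶜ (π ((u + v) / 2)) :=
          (isPreconnected_Ioo.image _ continuous_coe.continuousOn).subset_connectedComponentIn
            hzS hSsub
        have : (x : UnitAddCircle) ∈ closure (π '' Ioo u v) := by
          rw [← hu]
          apply image_closure_subset_closure_image continuous_coe
          have hne' : u ≠ v := ne_of_lt hlt
          have hmem : u ∈ closure (Ioo u v) := by
            rw [closure_Ioo hne']
            exact ⟨le_rfl, le_of_lt hlt⟩
          exact mem_image_of_mem _ hmem
        exact closure_mono hSC this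
      · have hSC : π '' Ioo u v ⊆ connectedComponentIn Kᶜ (π ((u + v) / 2)) := by
          apply (isPreconnected_Ioo.image _ continuous_coe.continuousOn).subset_connectedComponentIn
            (mem_image_of_mem _ ⟨by linarith, by linarith⟩)
          rintro _ ⟨s, hs, rfl⟩
          rw [mem_compl_iff]
          intro hsK
          have : s ∈ Ioo u v ∩ KR K := ⟨hs, by rwa [KR, mem_preimage]⟩
          rw [hgap] at this
          exact notMem_empty _ this
        have : (y : UnitAddCircle) ∈ closure (π '' Ioo u v) := by
          rw [← hvy]
          apply image_closure_subset_closure_image continuous_coe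
          have hne' : u ≠ v := ne_of_lt hlt
          have hmem : v ∈ closure (Ioo u v) := by
            rw [closure_Ioo hne']
            exact ⟨le_of_lt hlt, le_rfl⟩
          exact mem_image_of_mem _ hmem
        exact closure_mono hSC this
  · -- F v = F u + 1
    have hFv : F μ v = F μ u + 1 := by
      have : F μ u - F μ v = -1 := by rw [hn]; norm_num
      linarith
    have hFu1 : F μ (u + 1) = F μ u + 1 := by
      have h2 := F_int_add hμ1 hμa u 1
      push_cast at h2
      exact h2
    have hgap : Ioo v (u + 1) ∩ KR K = ∅ := by
      by_contra hcon
      rw [← ne_eq, ← nonempty_iff_ne_empty] at hcon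
      have := P3 hμ1 hμa hμK hμpos hKacc v (u + 1) huv2 hcon
      rw [hFu1, hFv] at this
      linarith
    have hux : π (u + 1) = (x : UnitAddCircle) := by
      rw [show u + 1 = u + ((1:ℤ):ℝ) by push_cast; ring, coe_add_int, hu]
    refine Or.inr ⟨π ((v + (u + 1)) / 2), ?_, ?_, ?_⟩
    · rw [mem_compl_iff]
      intro hmem
      have : (v + (u + 1)) / 2 ∈ Ioo v (u + 1) ∩ KR K :=
        ⟨⟨by linarith, by linarith⟩, by rwa [KR, mem_preimage]⟩
      rw [hgap] at this
      exact notMem_empty _ this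
    · have hSC : π '' Ioo v (u + 1) ⊆ connectedComponentIn Kᶜ (π ((v + (u + 1)) / 2)) := by
        apply (isPreconnected_Ioo.image _ continuous_coe.continuousOn).subset_connectedComponentIn
          (mem_image_of_mem _ ⟨by linarith, by linarith⟩)
        rintro _ ⟨s, hs, rfl⟩
        rw [mem_compl_iff]
        intro hsK
        have : s ∈ Ioo v (u + 1) ∩ KR K := ⟨hs, by rwa [KR, mem_preimage]⟩
        rw [hgap] at this
        exact notMem_empty _ this
      have : (x : UnitAddCircle) ∈ closure (π '' Ioo v (u + 1)) := by
        rw [← hux]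
        apply image_closure_subset_closure_image continuous_coe
        have hne' : v ≠ u + 1 := ne_of_lt huv2
        have hmem : u + 1 ∈ closure (Ioo v (u + 1)) := by
          rw [closure_Ioo hne']
          exact ⟨le_of_lt huv2, le_rfl⟩
        exact mem_image_of_mem _ hmem
      exact closure_mono hSC this
    · have hSC : π '' Ioo v (u + 1) ⊆ connectedComponentIn Kᶜ (π ((v + (u + 1)) / 2)) := by
        apply (isPreconnected_Ioo.image _ continuous_coe.continuousOn).subset_connectedComponentIn
          (mem_image_of_mem _ ⟨by linarith, by linarith⟩)
        rintro _ ⟨s, hs, rfl⟩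
        rw [mem_compl_iff]
        intro hsK
        have : s ∈ Ioo v (u + 1) ∩ KR K := ⟨hs, by rwa [KR, mem_preimage]⟩
        rw [hgap] at this
        exact notMem_empty _ this
      have : (y : UnitAddCircle) ∈ closure (π '' Ioo v (u + 1)) := by
        rw [← hvy]
        apply image_closure_subset_closure_image continuous_coe
        have hne' : v ≠ u + 1 := ne_of_lt huv2
        have hmem : v ∈ closure (Ioo v (u + 1)) := by
          rw [closure_Ioo hne']
          exact ⟨le_rfl, le_of_lt huv2⟩
        exact mem_image_of_mem _ hmem
      exact closure_mono hSC this

end Phi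

end Main


end
end Stmt8

/-- If `K` is a nonempty, compact, perfect subset of the circle
`ℝ/ℤ`, then the quotient of `K` by the relation collapsing the two endpoints of each
gap of `K` to a point is homeomorphic to the circle. -/
theorem stmt8 (K : Set UnitAddCircle) (hne : K.Nonempty) (hcompact : IsCompact K)
    (hperfect : Perfect K) :
    Nonempty (Quot (gapRel K) ≃ₜ UnitAddCircle) := by
  classical
  obtain ⟨μ, hμ1, hμa, hμK, hμpos⟩ := Stmt8.exists_good_measure K hne hperfect
  have hK : IsClosed K := hperfect.closed
  have hKacc : Preperfect K := hperfect.acc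
  set θ : K → UnitAddCircle := fun k => Stmt8.Φ μ (k : UnitAddCircle) with hθ
  have hresp : ∀ a b : K, gapRel K a b → θ a = θ b := by
    intro a b hab
    rcases hab with rfl | ⟨z, hz, haz, hbz⟩
    · rfl
    · have h1 := Stmt8.Φ_const_on_gap hμ1 hμa hμK hK hz _ haz
      have h2 := Stmt8.Φ_const_on_gap hμ1 hμa hμK hK hz _ hbz
      simp only [hθ]
      rw [h1, h2]
  let E0 : Quot (gapRel K) → UnitAddCircle := Quot.lift θ hresp
  have hcont : Continuous E0 :=
    continuous_quot_lift _ ((Stmt8.Φ_continuous hμ1 hμa).comp continuous_subtype_val)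
  have hsurj : Function.Surjective E0 := by
    intro w
    obtain ⟨r, rfl⟩ := QuotientAddGroup.mk_surjective w
    obtain ⟨a, haK, hFa⟩ := Stmt8.F_surjOn hμ1 hμa hμK hμpos hK hKacc hne r
    refine ⟨Quot.mk _ ⟨((a : ℝ) : UnitAddCircle), haK⟩, ?_⟩
    show Stmt8.Φ μ ((a : ℝ) : UnitAddCircle) = _
    rw [Stmt8.Φ_coe hμ1 hμa, hFa]
  have hinj : Function.Injective E0 := by
    intro p q
    induction p using Quot.ind with | _ a =>
    induction q using Quot.ind with | _ b =>
    intro h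
    exact Quot.sound (Stmt8.gap_of_eq hμ1 hμa hμK hμpos hKacc h)
  haveI : CompactSpace K := isCompact_iff_compactSpace.mp hcompact
  haveI : CompactSpace (Quot (gapRel K)) := by
    constructor
    have hrange : Set.range (Quot.mk (gapRel K)) = Set.univ :=
      Set.range_eq_univ.mpr Quot.mk_surjective
    rw [← hrange]
    exact isCompact_range continuous_quot_mk
  exact ⟨Continuous.homeoOfEquivCompactToT2 (f := Equiv.ofBijective E0 ⟨hinj, hsurj⟩) hcont⟩
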